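/- Any convex function ψ: N_ℝ → ℝ with ψ = max_j ⟨m_j, ·⟩ + O(1) satisfies ψ^{cc} ≥ ψ on N_ℝ ∖ int(Δ^∨), and hence ψ^{cc} = ψ on B = ∂Δ^∨. -/

import Mathlib

open Set

/-- Auxiliary: existence of a subgradient for a convex function on a
finite-dimensional inner product space. -/
lemma exists_subgradient_aux {V : Type*} [NormedAddCommGroup V] [InnerProductSpace ℝ V]
    [FiniteDimensional ℝ V]
    (ψ : V → ℝ) (hconv : ConvexOn ℝ Set.univ ψ) (y : V) :
    ∃ g : V, ∀ x, ψ y + (inner ℝ g x : ℝ) - inner ℝ g y ≤ ψ x := by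
  have hψcont : Continuous ψ := by
    have := hconv.continuousOn isOpen_univ
    rwa [continuousOn_univ] at this
  have hsconv : Convex ℝ {p : V × ℝ | ψ p.1 < p.2} := by
    have := hconv.convex_strict_epigraph
    simpa using this
  have hsopen : IsOpen {p : V × ℝ | ψ p.1 < p.2} := by
    have hcont : Continuous fun p : V × ℝ => p.2 - ψ p.1 :=
      continuous_snd.sub (hψcont.comp continuous_fst)
    have heq : {p : V × ℝ | ψ p.1 < p.2} = (fun p : V × ℝ => p.2 - ψ p.1) ⁻¹' (Set.Ioi 0) := by
      ext p; simp [sub_pos]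
    rw [heq]; exact isOpen_Ioi.preimage hcont
  obtain ⟨f, hf⟩ := geometric_hahn_banach_open_point hsconv hsopen
    (show ((y, ψ y) : V × ℝ) ∉ _ by simp)
  set α := f (0, 1) with hα
  have hdecomp : ∀ (v : V) (t : ℝ), f (v, t) = f (v, 0) + t * α := by
    intro v t
    have h1 : ((v, t) : V × ℝ) = (v, (0:ℝ)) + t • ((0:V), (1:ℝ)) := by
      simp [Prod.ext_iff]
    rw [h1, map_add, map_smul, smul_eq_mul, hα]
  have hαneg : α < 0 := by
    have h1 := hf (y, ψ y + 1) (by simp)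
    rw [hdecomp y (ψ y + 1), hdecomp y (ψ y)] at h1
    linarith
  have hkey : ∀ x, f (x, 0) + ψ x * α ≤ f (y, 0) + ψ y * α := by
    intro x
    by_contra hcc
    push_neg at hcc
    set ε := (f (x,0) + ψ x * α - (f (y,0) + ψ y * α)) / (-α) with hε
    have hεpos : 0 < ε := div_pos (by linarith) (by linarith)
    have h2 := hf (x, ψ x + ε) (by simp [hεpos])
    rw [hdecomp x (ψ x + ε), hdecomp y (ψ y)] at h2
    have hne : -α ≠ 0 := by intro h; apply absurd hcc; push_neg; nlinarith [neg_eq_zero.1 h]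
    have hene : ε * -α = f (x,0) + ψ x * α - (f (y,0) + ψ y * α) := div_mul_cancel₀ _ hne
    nlinarith
  set w := (InnerProductSpace.toDual ℝ V).symm (f.comp (ContinuousLinearMap.inl ℝ V ℝ)) with hw
  have hwx : ∀ x : V, (inner ℝ w x : ℝ) = f (x, 0) := by
    intro x
    rw [hw, InnerProductSpace.toDual_symm_apply]
    simp
  refine ⟨(-α)⁻¹ • w, fun x => ?_⟩
  have hα' : (0:ℝ) < -α := by linarith
  have hne : -α ≠ 0 := ne_of_gt hα'
  have h1 := hkey x
  rw [← hwx x, ← hwx y] at h1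
  rw [real_inner_smul_left, real_inner_smul_left]
  have h2 : (inner ℝ w x : ℝ) - inner ℝ w y ≤ (-α) * (ψ x - ψ y) := by nlinarith
  have h3 := mul_le_mul_of_nonneg_left h2 (inv_nonneg.2 hα'.le)
  rw [← mul_assoc, inv_mul_cancel₀ hne, one_mul] at h3
  linarith

/-- Extension property: any convex `ψ : N_ℝ → ℝ` with `ψ = max_j ⟨m_j,·⟩ + O(1)`
satisfies `ψ^{cc} ≥ ψ` on `N_ℝ ∖ int(Δ^∨)`, and hence `ψ^{cc} = ψ` on `B = ∂Δ^∨`.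
Here `Δ = conv(m_j)`, `Δ^∨` is its polar, `A = ∂Δ`, `B = ∂Δ^∨`,
`ψ^c(m) = sup_{n∈B}(⟨m,n⟩ − ψ(n))` and `ψ^{cc}(n) = sup_{m∈A}(⟨m,n⟩ − ψ^c(m))`. -/
theorem double_cTransform_extension {V : Type*} [NormedAddCommGroup V]
    [InnerProductSpace ℝ V] [FiniteDimensional ℝ V]
    (d : ℕ) (m : Fin (d + 2) → V)
    (Δ : Set V) (hΔ : Δ = convexHull ℝ (Set.range m))
    (Dv : Set V) (hDv : Dv = {x | ∀ i, (inner ℝ (m i) x : ℝ) ≤ 1})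
    (A : Set V) (hA : A = frontier Δ)
    (B : Set V) (hB : B = frontier Dv)
    (ψ : V → ℝ) (hconv : ConvexOn ℝ Set.univ ψ)
    (hgrowth : ∃ C, ∀ x, |ψ x - ⨆ i, (inner ℝ (m i) x : ℝ)| ≤ C)
    (ψc : V → ℝ) (hψc : ψc = fun x => ⨆ n : B, ((inner ℝ x (n : V) : ℝ) - ψ n))
    (ψcc : V → ℝ) (hψcc : ψcc = fun y => ⨆ x : A, ((inner ℝ (x : V) y : ℝ) - ψc x)) :
    (∀ y ∉ interior Dv, ψ y ≤ ψcc y) ∧ ∀ y ∈ B, ψcc y = ψ y := by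
  obtain ⟨C, hC⟩ := hgrowth
  -- basic facts
  have hbddm : ∀ x : V, BddAbove (Set.range fun i : Fin (d+2) => (inner ℝ (m i) x : ℝ)) :=
    fun x => (Set.finite_range _).bddAbove
  have hψ_le : ∀ x, ψ x ≤ (⨆ i, (inner ℝ (m i) x : ℝ)) + C := by
    intro x; have := (abs_le.1 (hC x)).2; linarith
  have hψ_ge : ∀ x, (⨆ i, (inner ℝ (m i) x : ℝ)) - C ≤ ψ x := by
    intro x; have := (abs_le.1 (hC x)).1; linarith
  -- characterization of points outside the interior of Dv
  have hmem_int : ∀ y : V, y ∉ interior Dv → ∃ i, m i ≠ 0 ∧ 1 ≤ (inner ℝ (m i) y : ℝ) := by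
    intro y hy
    by_contra hcon
    push_neg at hcon
    apply hy
    have hUopen : IsOpen {x : V | ∀ i, m i ≠ 0 → (inner ℝ (m i) x : ℝ) < 1} := by
      have heq : {x : V | ∀ i, m i ≠ 0 → (inner ℝ (m i) x : ℝ) < 1}
          = ⋂ i, {x : V | m i ≠ 0 → (inner ℝ (m i) x : ℝ) < 1} := by
        ext x; simp [Set.mem_iInter]
      rw [heq]
      refine isOpen_iInter_of_finite fun i => ?_
      by_cases hmi : m i = 0
      · simp [hmi]
      · have heq2 : {x : V | m i ≠ 0 → (inner ℝ (m i) x : ℝ) < 1}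
            = {x : V | (inner ℝ (m i) x : ℝ) < 1} := by ext x; simp [hmi]
        rw [heq2]
        exact isOpen_lt (continuous_const.inner continuous_id) continuous_const
    have hsub : {x : V | ∀ i, m i ≠ 0 → (inner ℝ (m i) x : ℝ) < 1} ⊆ Dv := by
      intro x hx
      rw [hDv]
      intro i
      by_cases hmi : m i = 0
      · simp [hmi]
      · exact (hx i hmi).le
    exact interior_maximal hsub hUopen (fun i hi => hcon i hi)
  have hΔcpt : IsCompact Δ := by rw [hΔ]; exact (Set.finite_range m).isCompact_convexHull ℝ
  have hΔclosed : IsClosed Δ := hΔcpt.isClosed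
  have hΔconv : Convex ℝ Δ := by rw [hΔ]; exact convex_convexHull ℝ _
  have hm0Δ : m 0 ∈ Δ := by rw [hΔ]; exact subset_convexHull ℝ _ ⟨0, rfl⟩
  obtain ⟨R, hR⟩ : ∃ R, ∀ x ∈ Δ, ‖x‖ ≤ R := hΔcpt.isBounded.exists_norm_le
  have hR0 : 0 ≤ R := le_trans (norm_nonneg _) (hR _ hm0Δ)
  have hDvclosed : IsClosed Dv := by
    have heq : Dv = ⋂ i, {x : V | (inner ℝ (m i) x : ℝ) ≤ 1} := by
      rw [hDv]; ext x; simp [Set.mem_iInter]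
    rw [heq]
    exact isClosed_iInter fun i =>
      isClosed_le (continuous_const.inner continuous_id) continuous_const
  have h0Dv : (0:V) ∈ Dv := by rw [hDv]; intro i; simp
  have hADsub : A ⊆ Δ := by rw [hA]; exact hΔclosed.frontier_subset
  have hBDsub : B ⊆ Dv := by rw [hB]; exact hDvclosed.frontier_subset
  -- polar inequality
  have hpolar : ∀ x ∈ Δ, ∀ n ∈ Dv, (inner ℝ x n : ℝ) ≤ 1 := by
    intro x hx n hn
    rw [hDv] at hn
    have hsub : Set.range m ⊆ {z : V | (inner ℝ z n : ℝ) ≤ 1} := by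
      rintro _ ⟨i, rfl⟩
      simpa using hn i
    have hcvx : Convex ℝ {z : V | (inner ℝ z n : ℝ) ≤ 1} := by
      intro u hu v hv a b ha hb hab
      simp only [Set.mem_setOf_eq] at hu hv ⊢
      rw [inner_add_left, real_inner_smul_left, real_inner_smul_left]
      nlinarith
    rw [hΔ] at hx
    exact convexHull_min hsub hcvx hx
  -- lower bound for ψ on B
  have hBlow : ∀ n ∈ B, 1 - C ≤ ψ n := by
    intro n hn
    have hni : n ∉ interior Dv := by
      rw [hB] at hn; exact fun h => hn.2 h
    obtain ⟨i, hmi, hge⟩ := hmem_int n hni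
    have h1 : (1:ℝ) ≤ ⨆ i, (inner ℝ (m i) n : ℝ) := le_trans hge (le_ciSup (hbddm n) i)
    have := hψ_ge n; linarith
  -- ψc is bounded above on Δ
  have hψcB : ∀ x ∈ Δ, BddAbove (Set.range fun n : B => ((inner ℝ x (n:V) : ℝ) - ψ n)) := by
    intro x hx
    refine ⟨C, ?_⟩
    rintro _ ⟨n, rfl⟩
    have h1 := hpolar x hx n (hBDsub n.2)
    have h2 := hBlow n n.2
    simp only
    linarith
  -- B nonempty when Dv proper
  have hBne : ∀ y : V, y ∉ Dv → B.Nonempty := by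
    intro y hy
    rcases Set.eq_empty_or_nonempty B with hfe | hne
    · rw [hB] at hfe
      rcases frontier_eq_empty_iff.1 hfe with h | h
      · rw [h] at h0Dv; exact absurd h0Dv (Set.notMem_empty 0)
      · rw [h] at hy; exact absurd (Set.mem_univ y) hy
    · exact hne
  -- A nonempty when some m j ≠ 0
  have hAne : ∀ j, m j ≠ 0 → A.Nonempty := by
    intro j hj
    rcases Set.eq_empty_or_nonempty A with hfe | hne
    · rw [hA] at hfe
      rcases frontier_eq_empty_iff.1 hfe with h | h
      · rw [h] at hm0Δ; exact absurd hm0Δ (Set.notMem_empty _)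
      · exfalso
        have hmj : (0:ℝ) < ‖m j‖ := norm_pos_iff.2 hj
        have hmem : ((R+1)/‖m j‖) • m j ∈ Δ := by rw [h]; exact Set.mem_univ _
        have hnorm : ‖((R+1)/‖m j‖) • m j‖ = R + 1 := by
          rw [norm_smul, Real.norm_eq_abs, abs_of_pos (by positivity)]
          field_simp
        have := hR _ hmem
        rw [hnorm] at this
        linarith
    · exact hne
  -- subgradients lie in Δ
  have hsubgrad : ∀ y : V, ∃ g ∈ Δ, ∀ x, ψ y + (inner ℝ g x : ℝ) - inner ℝ g y ≤ ψ x := by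
    intro y
    obtain ⟨g, hg⟩ := exists_subgradient_aux ψ hconv y
    refine ⟨g, ?_, hg⟩
    by_contra hgΔ
    obtain ⟨f2, u, hfu, huf⟩ := geometric_hahn_banach_closed_point hΔconv hΔclosed hgΔ
    set w2 := (InnerProductSpace.toDual ℝ V).symm f2 with hw2
    have hw2x : ∀ x : V, (inner ℝ w2 x : ℝ) = f2 x := fun x =>
      InnerProductSpace.toDual_symm_apply
    have hmu : ∀ i, (inner ℝ (m i) w2 : ℝ) ≤ u := by
      intro i
      have h1 : f2 (m i) < u := hfu (m i) (by rw [hΔ]; exact subset_convexHull ℝ _ ⟨i, rfl⟩)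
      rw [real_inner_comm, hw2x]
      exact h1.le
    have hstep : ∀ s : ℝ, 0 < s →
        s * (inner ℝ g w2 : ℝ) ≤ s * u + C + (inner ℝ g y : ℝ) - ψ y := by
      intro s hs
      have h1 := hg (s • w2)
      have h2 : ψ (s • w2) ≤ (⨆ i, (inner ℝ (m i) (s • w2) : ℝ)) + C := hψ_le _
      have h3 : (⨆ i, (inner ℝ (m i) (s • w2) : ℝ)) ≤ s * u := by
        apply ciSup_le
        intro i
        rw [real_inner_smul_right]
        exact mul_le_mul_of_nonneg_left (hmu i) hs.le
      rw [real_inner_smul_right] at h1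
      linarith
    have hgu : (inner ℝ g w2 : ℝ) ≤ u := by
      by_contra hgt
      push_neg at hgt
      set δ := (inner ℝ g w2 : ℝ) - u with hδ
      have hδpos : 0 < δ := by linarith
      set s := (|C + (inner ℝ g y : ℝ) - ψ y| + 1) / δ with hs
      have hspos : 0 < s := by positivity
      have h1 := hstep s hspos
      have h2 : s * δ = |C + (inner ℝ g y : ℝ) - ψ y| + 1 := div_mul_cancel₀ _ (ne_of_gt hδpos)
      have h3 : C + (inner ℝ g y : ℝ) - ψ y ≤ |C + (inner ℝ g y : ℝ) - ψ y| := le_abs_self _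
      nlinarith
    have hfin : f2 g ≤ u := by rw [← hw2x, real_inner_comm]; exact hgu
    linarith
  -- core lemma : outside Dv, ψ ≤ ψcc
  have hcore : ∀ y : V, y ∉ Dv → ψ y ≤ ψcc y := by
    intro y hy
    obtain ⟨n₀, hn₀⟩ := hBne y hy
    haveI hBne' : Nonempty B := ⟨⟨n₀, hn₀⟩⟩
    obtain ⟨j, hj⟩ : ∃ j, 1 < (inner ℝ (m j) y : ℝ) := by
      by_contra hcc
      push_neg at hcc
      exact hy (by rw [hDv]; exact fun i => hcc i)
    have hmj : m j ≠ 0 := by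
      intro h0; rw [h0, inner_zero_left] at hj; linarith
    have hmjn : (0:ℝ) < ‖m j‖ := norm_pos_iff.2 hmj
    obtain ⟨g, hgΔ, hsg⟩ := hsubgrad y
    set S := {r : ℝ | 0 ≤ r ∧ g + r • m j ∈ Δ} with hS
    have hS0 : (0:ℝ) ∈ S := ⟨le_refl 0, by simpa using hgΔ⟩
    have hSbdd : BddAbove S := by
      refine ⟨(R + ‖g‖)/‖m j‖, fun r hr => ?_⟩
      have h1 : ‖g + r • m j‖ ≤ R := hR _ hr.2
      have h2 : ‖r • m j‖ ≤ ‖g + r • m j‖ + ‖g‖ := by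
        have := norm_sub_le (g + r • m j) g
        simpa using this
      have h3 : ‖r • m j‖ = r * ‖m j‖ := by
        rw [norm_smul, Real.norm_eq_abs, abs_of_nonneg hr.1]
      rw [le_div_iff₀ hmjn]
      nlinarith
    set r0 := sSup S with hr0
    have hr0mem : r0 ∈ S := by
      have hclosed : IsClosed S := by
        have heq : S = Set.Ici (0:ℝ) ∩ (fun r : ℝ => g + r • m j) ⁻¹' Δ := by
          ext r; simp [hS, Set.mem_Ici]
        rw [heq]
        exact isClosed_Ici.inter (hΔclosed.preimage (continuous_const.add (continuous_id.smul continuous_const)))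
      exact hclosed.csSup_mem ⟨0, hS0⟩ hSbdd
    have hr0nn : 0 ≤ r0 := hr0mem.1
    set xs := g + r0 • m j with hxs
    have hxsΔ : xs ∈ Δ := hr0mem.2
    have hxsA : xs ∈ A := by
      rw [hA]
      refine ⟨subset_closure hxsΔ, ?_⟩
      intro hint
      obtain ⟨ε, hε, hball⟩ := Metric.isOpen_iff.1 isOpen_interior xs hint
      have hmem : g + (r0 + ε/(2*‖m j‖)) • m j ∈ Δ := by
        apply interior_subset
        apply hball
        rw [Metric.mem_ball, dist_eq_norm]
        have heq : g + (r0 + ε/(2*‖m j‖)) • m j - xs = (ε/(2*‖m j‖)) • m j := by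
          rw [hxs]; rw [add_smul]; abel
        rw [heq, norm_smul, Real.norm_eq_abs, abs_of_pos (by positivity)]
        have h5 : ε / (2 * ‖m j‖) * ‖m j‖ = ε / 2 := by field_simp
        rw [h5]
        linarith
      have hmemS : r0 + ε/(2*‖m j‖) ∈ S := ⟨by positivity, hmem⟩
      have := le_csSup hSbdd hmemS
      rw [← hr0] at this
      have hpos : 0 < ε/(2*‖m j‖) := by positivity
      linarith
    -- bound ψc xs ≤ ψc g + r0
    have hψc_le : ψc xs ≤ ψc g + r0 := by
      simp only [hψc]
      apply ciSup_le
      intro n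
      have h1 : (inner ℝ xs (n:V) : ℝ) = inner ℝ g (n:V) + r0 * inner ℝ (m j) (n:V) := by
        rw [hxs, inner_add_left, real_inner_smul_left]
      have h2 : (inner ℝ (m j) (n:V) : ℝ) ≤ 1 := by
        have := hBDsub n.2
        rw [hDv] at this
        exact this j
      have h3 : (inner ℝ g (n:V) : ℝ) - ψ n ≤ ⨆ n : B, ((inner ℝ g (n:V) : ℝ) - ψ n) :=
        le_ciSup (hψcB g hgΔ) n
      have h4 : r0 * (inner ℝ (m j) (n:V) : ℝ) ≤ r0 := by nlinarith
      rw [h1]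
      linarith
    have hψcg : ψc g ≤ (inner ℝ g y : ℝ) - ψ y := by
      simp only [hψc]
      apply ciSup_le
      intro n
      have := hsg (n : V)
      linarith
    -- bddAbove for the ψcc sup at any point
    have hbddA : ∀ z : V, BddAbove (Set.range fun x : A => ((inner ℝ (x:V) z : ℝ) - ψc x)) := by
      intro z
      refine ⟨R * ‖z - n₀‖ + ψ n₀, ?_⟩
      rintro _ ⟨x, rfl⟩
      have hxΔ : (x:V) ∈ Δ := hADsub x.2
      have h1 : (inner ℝ (x:V) n₀ : ℝ) - ψ n₀ ≤ ψc x := by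
        simp only [hψc]; exact le_ciSup (hψcB x hxΔ) ⟨n₀, hn₀⟩
      have h2 : (inner ℝ (x:V) (z - n₀) : ℝ) ≤ ‖(x:V)‖ * ‖z - n₀‖ := real_inner_le_norm _ _
      have h3 : ‖(x:V)‖ * ‖z - n₀‖ ≤ R * ‖z - n₀‖ :=
        mul_le_mul_of_nonneg_right (hR _ hxΔ) (norm_nonneg _)
      have h4 : (inner ℝ (x:V) z : ℝ) = inner ℝ (x:V) (z - n₀) + inner ℝ (x:V) n₀ := by
        rw [inner_sub_right]; ring
      simp only
      linarith
    have hfinal : (inner ℝ xs y : ℝ) - ψc xs ≤ ψcc y := by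
      simp only [hψcc]
      exact le_ciSup (hbddA y) ⟨xs, hxsA⟩
    have hxy : (inner ℝ xs y : ℝ) = inner ℝ g y + r0 * inner ℝ (m j) y := by
      rw [hxs, inner_add_left, real_inner_smul_left]
    nlinarith
  -- part 1
  have hpart1 : ∀ y ∉ interior Dv, ψ y ≤ ψcc y := by
    intro y hy
    obtain ⟨j, hmj, hj⟩ := hmem_int y hy
    have hnotDv : ∀ μ : ℝ, 1 < μ → μ • y ∉ Dv := by
      intro μ hμ hmem
      rw [hDv] at hmem
      have := hmem j
      rw [inner_smul_right] at this
      nlinarith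
    obtain ⟨n₀, hn₀⟩ := hBne ((2:ℝ) • y) (hnotDv 2 one_lt_two)
    obtain ⟨a₀, ha₀⟩ := hAne j hmj
    haveI : Nonempty A := ⟨⟨a₀, ha₀⟩⟩
    have hbddA : ∀ z : V, BddAbove (Set.range fun x : A => ((inner ℝ (x:V) z : ℝ) - ψc x)) := by
      intro z
      refine ⟨R * ‖z - n₀‖ + ψ n₀, ?_⟩
      rintro _ ⟨x, rfl⟩
      have hxΔ : (x:V) ∈ Δ := hADsub x.2
      have h1 : (inner ℝ (x:V) n₀ : ℝ) - ψ n₀ ≤ ψc x := by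
        simp only [hψc]; exact le_ciSup (hψcB x hxΔ) ⟨n₀, hn₀⟩
      have h2 : (inner ℝ (x:V) (z - n₀) : ℝ) ≤ ‖(x:V)‖ * ‖z - n₀‖ := real_inner_le_norm _ _
      have h3 : ‖(x:V)‖ * ‖z - n₀‖ ≤ R * ‖z - n₀‖ :=
        mul_le_mul_of_nonneg_right (hR _ hxΔ) (norm_nonneg _)
      have h4 : (inner ℝ (x:V) z : ℝ) = inner ℝ (x:V) (z - n₀) + inner ℝ (x:V) n₀ := by
        rw [inner_sub_right]; ring
      simp only
      linarith
    have hlip : ∀ z1 z2 : V, ψcc z1 ≤ ψcc z2 + R * ‖z1 - z2‖ := by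
      intro z1 z2
      simp only [hψcc]
      apply ciSup_le
      intro x
      have hxΔ : (x:V) ∈ Δ := hADsub x.2
      have h1 : (inner ℝ (x:V) z2 : ℝ) - ψc x ≤ ⨆ x : A, ((inner ℝ (x:V) z2 : ℝ) - ψc x) :=
        le_ciSup (hbddA z2) x
      have h2 : (inner ℝ (x:V) (z1 - z2) : ℝ) ≤ R * ‖z1 - z2‖ :=
        le_trans (real_inner_le_norm _ _)
          (mul_le_mul_of_nonneg_right (hR _ hxΔ) (norm_nonneg _))
      have h3 : (inner ℝ (x:V) z1 : ℝ) = inner ℝ (x:V) z2 + inner ℝ (x:V) (z1 - z2) := by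
        rw [inner_sub_right]; ring
      linarith
    have hconvb : ∀ μ : ℝ, 1 < μ → μ * ψ y - (μ - 1) * ψ 0 ≤ ψ (μ • y) := by
      intro μ hμ
      have h0 : (0:ℝ) < μ := by linarith
      have hμne : μ ≠ 0 := ne_of_gt h0
      have ha : (0:ℝ) ≤ 1/μ := by positivity
      have hb : (0:ℝ) ≤ 1 - 1/μ := by
        rw [sub_nonneg]; exact (div_le_one h0).2 (by linarith)
      have hab : 1/μ + (1 - 1/μ) = (1:ℝ) := by ring
      have hconv2 := hconv.2 (Set.mem_univ (μ • y)) (Set.mem_univ (0:V)) ha hb hab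
      rw [smul_zero, add_zero, smul_smul, one_div_mul_cancel hμne, one_smul] at hconv2
      have hmul := mul_le_mul_of_nonneg_left hconv2 h0.le
      have heq : μ * ((1/μ) • ψ (μ • y) + (1 - 1/μ) • ψ 0) = ψ (μ • y) + (μ - 1) * ψ 0 := by
        simp only [smul_eq_mul]
        field_simp
      rw [heq] at hmul
      linarith
    have hstep : ∀ μ : ℝ, 1 < μ → ψ y - ψcc y ≤ (μ - 1) * (ψ 0 + R * ‖y‖ - ψ y) := by
      intro μ hμ
      have h1 := hcore (μ • y) (hnotDv μ hμ)
      have h2 := hlip (μ • y) y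
      have h3 : ‖μ • y - y‖ = (μ - 1) * ‖y‖ := by
        have heq : μ • y - y = (μ - 1) • y := by rw [sub_smul, one_smul]
        rw [heq, norm_smul, Real.norm_eq_abs, abs_of_nonneg (by linarith : (0:ℝ) ≤ μ - 1)]
      have h4 := hconvb μ hμ
      rw [h3] at h2
      nlinarith
    by_contra hcc
    push_neg at hcc
    have hT : 0 < ψ 0 + R * ‖y‖ - ψ y := by
      by_contra h
      push_neg at h
      have := hstep 2 one_lt_two
      nlinarith
    set δ := ψ y - ψcc y with hδ
    have hδpos : 0 < δ := by rw [hδ]; linarith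
    set μ := 1 + δ / (2 * (ψ 0 + R * ‖y‖ - ψ y)) with hμ
    have hμgt : 1 < μ := by
      rw [hμ]
      have : 0 < δ / (2 * (ψ 0 + R * ‖y‖ - ψ y)) := by positivity
      linarith
    have := hstep μ hμgt
    have heq : (μ - 1) * (ψ 0 + R * ‖y‖ - ψ y) = δ / 2 := by
      rw [hμ]
      field_simp
      ring
    rw [heq] at this
    linarith
  refine ⟨hpart1, ?_⟩
  -- part 2
  intro y hy
  have hyint : y ∉ interior Dv := by rw [hB] at hy; exact fun h => hy.2 h
  have h1 : ψ y ≤ ψcc y := hpart1 y hyint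
  obtain ⟨j, hmj, _⟩ := hmem_int y hyint
  obtain ⟨a₀, ha₀⟩ := hAne j hmj
  haveI : Nonempty A := ⟨⟨a₀, ha₀⟩⟩
  refine le_antisymm ?_ h1
  simp only [hψcc]
  apply ciSup_le
  intro x
  have hxΔ : (x:V) ∈ Δ := hADsub x.2
  have h2 : (inner ℝ (x:V) y : ℝ) - ψ y ≤ ψc x := by
    simp only [hψc]
    exact le_ciSup (hψcB x hxΔ) ⟨y, hy⟩
  linarith
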